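/- arXiv:1207.3062 — 2 statements merged into one kernel-verified Lean document; each statement's English description precedes it below -/
import Mathlib

section
/- The map (d, e, f) ↦ (a, b, c) given by c = √(e/x₂), b = f/(x₂√(e/x₂)), a = √((d − f²/e)/x₁), defined on the region where e/x₂ > 0 and (d − f²/e)/x₁ > 0, has Jacobian determinant of absolute value 1/(4 a c² x₁ x₂²), where a and c are as defined. -/
open Real

/-- The inverse change of variables `(d,e,f) ↦ (a,b,c)` with
`c = √(e/x₂)`, `b = f/(x₂√(e/x₂))`, `a = √((d − f²/e)/x₁)`, on the region where
`e/x₂ > 0` and `(d − f²/e)/x₁ > 0`, has Jacobian determinant of absolute value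
`1/(4 a c² x₁ x₂²)`. -/
theorem stmt_1 (x₁ x₂ : ℝ) (hx₁ : x₁ ≠ 0) (hx₂ : x₂ ≠ 0)
    (φ : (Fin 3 → ℝ) → (Fin 3 → ℝ))
    (hφ : ∀ p : Fin 3 → ℝ,
      φ p = ![Real.sqrt ((p 0 - (p 2)^2 / p 1) / x₁),
              p 2 / (x₂ * Real.sqrt (p 1 / x₂)),
              Real.sqrt (p 1 / x₂)])
    (p : Fin 3 → ℝ) (he : 0 < p 1 / x₂) (hd : 0 < (p 0 - (p 2)^2 / p 1) / x₁) :
    |LinearMap.det ((fderiv ℝ φ p : (Fin 3 → ℝ) →L[ℝ] (Fin 3 → ℝ)) :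
        (Fin 3 → ℝ) →ₗ[ℝ] (Fin 3 → ℝ))| =
      |1 / (4 * Real.sqrt ((p 0 - (p 2)^2 / p 1) / x₁)
              * (Real.sqrt (p 1 / x₂))^2 * x₁ * x₂^2)| := by
  have hφ' : φ = fun q => ![Real.sqrt ((q 0 - (q 2)^2 / q 1) / x₁),
              q 2 / (x₂ * Real.sqrt (q 1 / x₂)),
              Real.sqrt (q 1 / x₂)] := funext hφ
  subst hφ'
  have he1 : p 1 ≠ 0 := by
    intro h; rw [h] at he; simp at he
  have hu : (p 0 - (p 2)^2 / p 1) / x₁ ≠ 0 := ne_of_gt hd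
  set a := Real.sqrt ((p 0 - (p 2)^2 / p 1) / x₁) with ha_def
  set c := Real.sqrt (p 1 / x₂) with hc_def
  have hc0 : (0:ℝ) < c := Real.sqrt_pos.mpr he
  have ha0 : (0:ℝ) < a := Real.sqrt_pos.mpr hd
  have hcne : c ≠ 0 := ne_of_gt hc0
  have hane : a ≠ 0 := ne_of_gt ha0
  have hs : x₂ * c ≠ 0 := mul_ne_zero hx₂ hcne
  have h0 : HasFDerivAt (fun q : Fin 3 → ℝ => q 0)
      (ContinuousLinearMap.proj 0 : (Fin 3 → ℝ) →L[ℝ] ℝ) p := hasFDerivAt_apply 0 p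
  have h1 : HasFDerivAt (fun q : Fin 3 → ℝ => q 1)
      (ContinuousLinearMap.proj 1 : (Fin 3 → ℝ) →L[ℝ] ℝ) p := hasFDerivAt_apply 1 p
  have h2 : HasFDerivAt (fun q : Fin 3 → ℝ => q 2)
      (ContinuousLinearMap.proj 2 : (Fin 3 → ℝ) →L[ℝ] ℝ) p := hasFDerivAt_apply 2 p
  -- component 0
  have hf0 : HasFDerivAt (fun q : Fin 3 → ℝ => Real.sqrt ((q 0 - (q 2)^2 / q 1) / x₁))
      ((1/(2*a*x₁)) • (ContinuousLinearMap.proj 0 : (Fin 3 → ℝ) →L[ℝ] ℝ)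
        + ((p 2)^2/(2*a*x₁*(p 1)^2)) • (ContinuousLinearMap.proj 1 : (Fin 3 → ℝ) →L[ℝ] ℝ)
        + (-(p 2)/(a*x₁*(p 1))) • (ContinuousLinearMap.proj 2 : (Fin 3 → ℝ) →L[ℝ] ℝ)) p := by
    have := (Real.hasDerivAt_sqrt hu).comp_hasFDerivAt p
      ((h0.sub (((hasDerivAt_pow 2 (p 2)).comp_hasFDerivAt (h₂ := fun x : ℝ => x^2) p h2).mul
        ((hasDerivAt_inv he1).comp_hasFDerivAt p h1))).mul_const x₁⁻¹)
    refine this.congr_fderiv ?_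
    ext v
    simp [Function.comp, ← ha_def]
    field_simp
    ring
  -- component 2
  have hf2 : HasFDerivAt (fun q : Fin 3 → ℝ => Real.sqrt (q 1 / x₂))
      ((1/(2*c*x₂)) • (ContinuousLinearMap.proj 1 : (Fin 3 → ℝ) →L[ℝ] ℝ)) p := by
    have := (Real.hasDerivAt_sqrt (ne_of_gt he)).comp_hasFDerivAt p (h1.mul_const x₂⁻¹)
    refine this.congr_fderiv ?_
    ext v
    simp [Function.comp, ← hc_def]
    field_simp
  -- component 1
  have hf1 : HasFDerivAt (fun q : Fin 3 → ℝ => q 2 / (x₂ * Real.sqrt (q 1 / x₂)))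
      ((-(p 2)/(2*x₂^2*c^3)) • (ContinuousLinearMap.proj 1 : (Fin 3 → ℝ) →L[ℝ] ℝ)
        + (1/(x₂*c)) • (ContinuousLinearMap.proj 2 : (Fin 3 → ℝ) →L[ℝ] ℝ)) p := by
    have hden : HasFDerivAt (fun q : Fin 3 → ℝ => (x₂ * Real.sqrt (q 1 / x₂))⁻¹)
        ((-((x₂*c)^2)⁻¹) • (x₂ • ((1/(2*c*x₂)) • (ContinuousLinearMap.proj 1 : (Fin 3 → ℝ) →L[ℝ] ℝ)))) p :=
      (hasDerivAt_inv hs).comp_hasFDerivAt p (hf2.const_mul x₂)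
    have := h2.mul hden
    refine this.congr_fderiv ?_
    ext v
    simp [← hc_def]
    field_simp
  have H : HasFDerivAt (fun q : Fin 3 → ℝ => ![Real.sqrt ((q 0 - (q 2)^2 / q 1) / x₁),
              q 2 / (x₂ * Real.sqrt (q 1 / x₂)),
              Real.sqrt (q 1 / x₂)])
      (ContinuousLinearMap.pi
        ![(1/(2*a*x₁)) • (ContinuousLinearMap.proj 0 : (Fin 3 → ℝ) →L[ℝ] ℝ)
        + ((p 2)^2/(2*a*x₁*(p 1)^2)) • (ContinuousLinearMap.proj 1 : (Fin 3 → ℝ) →L[ℝ] ℝ)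
        + (-(p 2)/(a*x₁*(p 1))) • (ContinuousLinearMap.proj 2 : (Fin 3 → ℝ) →L[ℝ] ℝ),
        (-(p 2)/(2*x₂^2*c^3)) • (ContinuousLinearMap.proj 1 : (Fin 3 → ℝ) →L[ℝ] ℝ)
        + (1/(x₂*c)) • (ContinuousLinearMap.proj 2 : (Fin 3 → ℝ) →L[ℝ] ℝ),
        (1/(2*c*x₂)) • (ContinuousLinearMap.proj 1 : (Fin 3 → ℝ) →L[ℝ] ℝ)]) p := by
    apply hasFDerivAt_pi''
    intro i
    fin_cases i <;>
      simp only [ContinuousLinearMap.proj_pi, Matrix.cons_val_zero, Matrix.cons_val_one,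
        Matrix.head_cons, Matrix.cons_val_two, Matrix.tail_cons, Fin.isValue]
    · exact hf0
    · exact hf1
    · exact hf2
  rw [H.fderiv]
  rw [← LinearMap.det_toMatrix (Pi.basisFun ℝ (Fin 3))]
  rw [Matrix.det_fin_three]
  simp only [LinearMap.toMatrix_apply, Pi.basisFun_apply, Pi.basisFun_repr,
    ContinuousLinearMap.coe_coe, ContinuousLinearMap.pi_apply,
    Matrix.cons_val_zero, Matrix.cons_val_one, Matrix.head_cons, Matrix.cons_val_two,
    Matrix.tail_cons, ContinuousLinearMap.add_apply, ContinuousLinearMap.coe_smul',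
    Pi.smul_apply, ContinuousLinearMap.proj_apply, smul_eq_mul]
  simp [Pi.single_apply]
  rw [abs_of_pos ha0, abs_of_pos hc0, ← sq_abs x₂]
  ring
end

section
/- For the special case x₁ = −x₂ = x > 0, with L ≥ 2 an integer and β > 0, the function f(σ) = 2 σ^{βL/2 − β/2 − 1} Γ(βL − β + 1) (σ+1)^{−β(L−1)} / (β(L−1) Γ(β(L−1)/2)²) is a probability density on [1, ∞): ∫₁^∞ f(σ) dσ = 1. -/
open Real MeasureTheory

/-- Real version of the Beta integral. -/
lemma real_beta {a b : ℝ} (ha : 0 < a) (hb : 0 < b) :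
    ∫ t in (0:ℝ)..1, t ^ (a - 1) * (1 - t) ^ (b - 1)
      = Real.Gamma a * Real.Gamma b / Real.Gamma (a + b) := by
  have hC := Complex.Gamma_mul_Gamma_eq_betaIntegral
    (s := (a:ℂ)) (t := (b:ℂ)) (by simpa using ha) (by simpa using hb)
  have hcast : Complex.betaIntegral a b
      = ((∫ t in (0:ℝ)..1, t ^ (a - 1) * (1 - t) ^ (b - 1) : ℝ) : ℂ) := by
    rw [Complex.betaIntegral, ← intervalIntegral.integral_ofReal]
    refine intervalIntegral.integral_congr (fun t ht => ?_)
    rw [Set.uIcc_of_le (by norm_num : (0:ℝ) ≤ 1)] at ht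
    obtain ⟨ht0, ht1⟩ := ht
    rw [Complex.ofReal_mul, Complex.ofReal_cpow ht0,
      Complex.ofReal_cpow (by linarith : (0:ℝ) ≤ 1 - t)]
    push_cast
    ring
  have this : ((Real.Gamma a * Real.Gamma b : ℝ) : ℂ)
      = ((Real.Gamma (a + b) * ∫ t in (0:ℝ)..1, t ^ (a - 1) * (1 - t) ^ (b - 1) : ℝ) : ℂ) := by
    push_cast
    rw [← Complex.Gamma_ofReal, ← Complex.Gamma_ofReal, ← Complex.Gamma_ofReal]
    push_cast
    rw [hC, hcast]
  have h2 := Complex.ofReal_injective this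
  have hGne : Real.Gamma (a + b) ≠ 0 := (Real.Gamma_pos_of_pos (by linarith)).ne'
  rw [eq_div_iff hGne]
  linear_combination -h2

lemma key_integral {a : ℝ} (ha : 0 < a) :
    ∫ σ in Set.Ioi (1:ℝ), σ ^ (a - 1) * (σ + 1) ^ (-(2 * a))
      = Real.Gamma a ^ 2 / (2 * Real.Gamma (2 * a)) := by
  have himg : (fun t : ℝ => t / (1 - t)) '' Set.Ioo (1/2 : ℝ) 1 = Set.Ioi 1 := by
    ext σ
    constructor
    · rintro ⟨t, ⟨ht1, ht2⟩, rfl⟩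
      have h1t : 0 < 1 - t := by linarith
      rw [Set.mem_Ioi, lt_div_iff₀ h1t]
      linarith
    · intro hσ
      rw [Set.mem_Ioi] at hσ
      have hs1 : (0:ℝ) < σ + 1 := by linarith
      refine ⟨σ / (σ + 1), ⟨?_, ?_⟩, ?_⟩
      · rw [lt_div_iff₀ hs1]; linarith
      · rw [div_lt_one hs1]; linarith
      · show σ / (σ + 1) / (1 - σ / (σ + 1)) = σ
        have h : 1 - σ / (σ + 1) = 1 / (σ + 1) := by field_simp; ring
        rw [h]
        field_simp
  have hderiv : ∀ t ∈ Set.Ioo (1/2 : ℝ) 1,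
      HasDerivWithinAt (fun t : ℝ => t / (1 - t)) (((1 - t) ^ 2)⁻¹) (Set.Ioo (1/2 : ℝ) 1) t := by
    intro t ht
    have h1t : (1 : ℝ) - t ≠ 0 := by have := ht.2; intro h; simp at ht; nlinarith
    have hd : HasDerivAt (fun t : ℝ => t / (1 - t))
        ((1 * (1 - t) - t * (0 - 1)) / (1 - t) ^ 2) t :=
      (hasDerivAt_id t).div ((hasDerivAt_const t (1:ℝ)).sub (hasDerivAt_id t)) h1t
    have heq : (1 * (1 - t) - t * (0 - 1)) / (1 - t) ^ 2 = ((1 - t) ^ 2)⁻¹ := by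
      field_simp
      ring
    rw [heq] at hd
    exact hd.hasDerivWithinAt
  have hinj : Set.InjOn (fun t : ℝ => t / (1 - t)) (Set.Ioo (1/2 : ℝ) 1) := by
    intro t ht s hs h
    have h1t : (1 : ℝ) - t ≠ 0 := by have := ht.2; intro hc; nlinarith
    have h1s : (1 : ℝ) - s ≠ 0 := by have := hs.2; intro hc; nlinarith
    simp only at h
    rw [div_eq_div_iff h1t h1s] at h
    nlinarith [h]
  rw [← himg, integral_image_eq_integral_abs_deriv_smul measurableSet_Ioo hderiv hinj]
  have hcong : ∫ t in Set.Ioo (1/2 : ℝ) 1,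
        |((1 - t) ^ 2)⁻¹| • ((t / (1 - t)) ^ (a - 1) * (t / (1 - t) + 1) ^ (-(2 * a)))
      = ∫ t in Set.Ioo (1/2 : ℝ) 1, t ^ (a - 1) * (1 - t) ^ (a - 1) := by
    refine setIntegral_congr_fun measurableSet_Ioo (fun t ht => ?_)
    obtain ⟨ht1, ht2⟩ := ht
    have h1t : (0 : ℝ) < 1 - t := by linarith
    have ht0 : (0 : ℝ) < t := by linarith
    have habs : |((1 - t) ^ 2)⁻¹| = (1 - t) ^ ((-2 : ℝ)) := by
      rw [abs_of_pos (by positivity), ← Real.rpow_natCast (1-t) 2, ← Real.rpow_neg h1t.le]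
      norm_num
    have hplus : t / (1 - t) + 1 = (1 - t)⁻¹ := by field_simp; ring
    rw [habs, hplus, smul_eq_mul, Real.div_rpow ht0.le h1t.le, Real.inv_rpow h1t.le,
      Real.rpow_neg h1t.le (2 * a), inv_inv, div_eq_mul_inv,
      ← Real.rpow_neg h1t.le (a - 1)]
    rw [mul_assoc (t ^ (a - 1)), ← Real.rpow_add h1t]
    rw [mul_comm ((1 - t) ^ ((-2:ℝ))), mul_assoc, ← Real.rpow_add h1t]
    congr 1
    congr 1
    ring
  rw [hcong, ← integral_Ioc_eq_integral_Ioo,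
    ← intervalIntegral.integral_of_le (by norm_num : (1/2 : ℝ) ≤ 1)]
  -- symmetry: integral over [1/2, 1] equals integral over [0, 1/2]
  have hsymm : (∫ t in (1/2 : ℝ)..1, t ^ (a - 1) * (1 - t) ^ (a - 1))
      = ∫ t in (0 : ℝ)..(1/2), t ^ (a - 1) * (1 - t) ^ (a - 1) := by
    have h := intervalIntegral.integral_comp_sub_left
      (a := (1/2 : ℝ)) (b := 1) (fun t => t ^ (a - 1) * (1 - t) ^ (a - 1)) 1
    simp only [show (1:ℝ) - 1 = 0 by norm_num, show (1:ℝ) - 1/2 = 1/2 by norm_num] at h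
    rw [← h]
    refine intervalIntegral.integral_congr (fun t _ => ?_)
    simp only [sub_sub_cancel]
    ring
  -- integrability on the two halves
  have hint1 : IntervalIntegrable (fun t : ℝ => t ^ (a - 1) * (1 - t) ^ (a - 1))
      volume 0 (1/2) := by
    refine (intervalIntegral.intervalIntegrable_rpow'
      (by linarith : (-1:ℝ) < a - 1)).mul_continuousOn ?_
    refine ContinuousOn.rpow_const (continuousOn_const.sub continuousOn_id) (fun t ht => ?_)
    rw [Set.uIcc_of_le (by norm_num : (0:ℝ) ≤ 1/2)] at ht
    exact Or.inl (by intro hc; have := ht.2; nlinarith)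
  have hint2 : IntervalIntegrable (fun t : ℝ => t ^ (a - 1) * (1 - t) ^ (a - 1))
      volume (1/2) 1 := by
    have hbase : IntervalIntegrable (fun t : ℝ => (1 - t) ^ (a - 1)) volume (1/2) 1 := by
      have h := (intervalIntegral.intervalIntegrable_rpow'
        (a := 0) (b := 1/2) (by linarith : (-1:ℝ) < a - 1)).comp_sub_left 1
      simp only [show (1:ℝ) - 0 = 1 by norm_num, show (1:ℝ) - 1/2 = 1/2 by norm_num] at h
      exact h.symm
    refine hbase.continuousOn_mul ?_
    refine ContinuousOn.rpow_const continuousOn_id (fun t ht => ?_)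
    rw [Set.uIcc_of_le (by norm_num : (1/2:ℝ) ≤ 1)] at ht
    exact Or.inl (by intro hc; have := ht.1; nlinarith)
  have hsplit : (∫ t in (0:ℝ)..(1/2), t ^ (a - 1) * (1 - t) ^ (a - 1))
      + (∫ t in (1/2:ℝ)..1, t ^ (a - 1) * (1 - t) ^ (a - 1))
      = ∫ t in (0:ℝ)..1, t ^ (a - 1) * (1 - t) ^ (a - 1) :=
    intervalIntegral.integral_add_adjacent_intervals hint1 hint2
  have hbeta := real_beta ha ha
  have h2a : a + a = 2 * a := by ring
  rw [h2a] at hbeta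
  rw [hsymm]
  rw [hsymm, hbeta] at hsplit
  have hG2 : (0:ℝ) < Real.Gamma (2 * a) := Real.Gamma_pos_of_pos (by linarith)
  rw [eq_div_iff (by positivity : 2 * Real.Gamma (2 * a) ≠ 0)]
  rw [eq_div_iff hG2.ne'] at hsplit
  linear_combination hsplit

/-- In the symmetric case `x₁ = −x₂ = x > 0`, the condition number density
`f(σ) = 2 σ^{βL/2 − β/2 − 1} Γ(βL − β + 1) (σ+1)^{−β(L−1)} / (β(L−1) Γ(β(L−1)/2)²)`
is a probability density on `[1, ∞)`. -/
theorem stmt_6 (L : ℕ) (hL : 2 ≤ L) (β : ℝ) (hβ : 0 < β) (x : ℝ) (hx : 0 < x) :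
    ∫ σ in Set.Ioi (1 : ℝ),
      2 * σ ^ (β * L / 2 - β / 2 - 1) * Real.Gamma (β * L - β + 1)
        * (σ + 1) ^ (-(β * (L - 1)))
        / (β * (L - 1) * (Real.Gamma (β * (L - 1) / 2))^2) = 1 := by
  have hL2 : (2:ℝ) ≤ (L:ℝ) := by exact_mod_cast hL
  have hLm : (0:ℝ) < (L:ℝ) - 1 := by linarith
  set a : ℝ := β * ((L : ℝ) - 1) / 2 with ha_def
  have ha : 0 < a := by rw [ha_def]; positivity
  have he1 : β * (L:ℝ) / 2 - β / 2 - 1 = a - 1 := by rw [ha_def]; ring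
  have he2 : -(β * ((L:ℝ) - 1)) = -(2 * a) := by rw [ha_def]; ring
  have he3 : β * (L:ℝ) - β + 1 = 2 * a + 1 := by rw [ha_def]; ring
  have he4 : β * ((L:ℝ) - 1) = 2 * a := by rw [ha_def]; ring
  simp_rw [he1, he2, he3, he4]
  simp_rw [show ∀ σ : ℝ, 2 * σ ^ (a - 1) * Real.Gamma (2 * a + 1) * (σ + 1) ^ (-(2 * a))
      / (2 * a * Real.Gamma a ^ 2)
      = (2 * Real.Gamma (2 * a + 1) / (2 * a * Real.Gamma a ^ 2))
        * (σ ^ (a - 1) * (σ + 1) ^ (-(2 * a))) from fun σ => by ring]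
  rw [integral_const_mul, key_integral ha,
    Real.Gamma_add_one (by positivity : (2 * a) ≠ 0)]
  have h1 : Real.Gamma a ≠ 0 := (Real.Gamma_pos_of_pos ha).ne'
  have h2 : Real.Gamma (2 * a) ≠ 0 := (Real.Gamma_pos_of_pos (by linarith)).ne'
  field_simp
end
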